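/- In the setting of the non-scattering theorem (existence of $\tilde u$ solving the two-phase problem with $\mathrm{supp}\,\mu_\pm\subset D_\pm=\{\pm\tilde u>0\}$, and a real-valued incident field $u_0$ with $u_0<0$ on $\partial D_+\cup\partial D_-$), if the obstacles touch, i.e. $\partial D_+\cap\partial D_-\neq\emptyset$, then the common boundary is a two-phase free boundary for the total field: near $\partial D_+\cap\partial D_-$ one has $u_{\rho_\pm}>u_0$ in $D_+$ and $u_{\rho_\pm}<u_0$ in $D_-$. Moreover, for each $x_0\in\partial D_+\cap\partial D_-$, the limits $\lim_{D_+\ni x\to x_0}\rho_+(x)=-\lambda_+/u_0(x_0)>0$ and $\lim_{D_-\ni x\to x_0}\rho_-(x)=-\lambda_- /u_0(x_0)>0$ both exist. -/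

import Mathlib

open MeasureTheory Filter Topology Set Metric

noncomputable section

abbrev Euc (n : ℕ) := EuclideanSpace ℝ (Fin n)

/-- The Laplacian of a function on `ℝⁿ`. -/
def laplacian {n : ℕ} (φ : Euc n → ℝ) (x : Euc n) : ℝ :=
  ∑ i : Fin n, iteratedFDeriv ℝ 2 φ x ![EuclideanSpace.single i (1:ℝ), EuclideanSpace.single i 1]

/-- Smooth test functions compactly supported in `Ω`. -/
def IsTestFun {n : ℕ} (Ω : Set (Euc n)) (φ : Euc n → ℝ) : Prop :=
  ContDiff ℝ (⊤ : ℕ∞) φ ∧ HasCompactSupport φ ∧ tsupport φ ⊆ Ω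

/-- A bounded Lipschitz domain: open, connected, bounded, and near every boundary
point the set is the region above the graph of a Lipschitz function. -/
def IsBoundedLipschitzDomain {n : ℕ} (Ω : Set (Euc n)) : Prop :=
  IsOpen Ω ∧ IsConnected Ω ∧ Bornology.IsBounded Ω ∧
  ∀ x ∈ frontier Ω, ∃ v : Euc n, ‖v‖ = 1 ∧
    ∃ (g : (ℝ ∙ v)ᗮ → ℝ) (L : NNReal) (U : Set (Euc n)), LipschitzWith L g ∧ U ∈ 𝓝 x ∧
      ∀ y ∈ U, (y ∈ Ω ↔ g (Submodule.orthogonalProjectionOnto (ℝ ∙ v)ᗮ y) < (inner ℝ y v : ℝ))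

/-- `du` is the weak (distributional) gradient of `u`. -/
def HasWeakGradient {n : ℕ} (u : Euc n → ℝ) (du : Euc n → Euc n) : Prop :=
  LocallyIntegrable u volume ∧ LocallyIntegrable du volume ∧
  ∀ φ : Euc n → ℝ, IsTestFun Set.univ φ → ∀ v : Euc n,
    ∫ x, u x * fderiv ℝ φ x v = - ∫ x, (inner ℝ (du x) v : ℝ) * φ x

/-- `u ∈ H¹₀(Ω)` with weak gradient `du`: square integrable, with square integrable weak
gradient, and approximable in the `H¹`-norm by test functions supported in `Ω`. -/
def MemH10 {n : ℕ} (Ω : Set (Euc n)) (u : Euc n → ℝ) (du : Euc n → Euc n) : Prop :=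
  MemLp u 2 volume ∧ MemLp du 2 volume ∧ HasWeakGradient u du ∧
  ∃ φs : ℕ → Euc n → ℝ, (∀ j, IsTestFun Ω (φs j)) ∧
    Tendsto (fun j => ∫ x, ((u x - φs j x) ^ 2 + ‖du x - gradient (φs j) x‖ ^ 2)) atTop (𝓝 0)

/-- The square `k_*(Ω)²` of the first Dirichlet eigenvalue of `-Δ` on `Ω`,
as the infimum of the Rayleigh quotient over test functions. -/
def kStarSq {n : ℕ} (Ω : Set (Euc n)) : ℝ :=
  sInf {r : ℝ | ∃ φ : Euc n → ℝ, IsTestFun Ω φ ∧ φ ≠ 0 ∧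
    r = (∫ x, ‖gradient φ x‖ ^ 2) / ∫ x, (φ x) ^ 2}

/-- The essential support of a measurable function. -/
def essSupp {n : ℕ} (f : Euc n → ℝ) : Set (Euc n) :=
  {x | ∀ U ∈ 𝓝 x, volume {y ∈ U | f y ≠ 0} ≠ 0}




section AuxLemmas

lemma laplacian_continuous {n : ℕ} {φ : Euc n → ℝ} (hφ : ContDiff ℝ (⊤ : ℕ∞) φ) :
    Continuous (laplacian φ) := by
  unfold laplacian
  refine continuous_finset_sum _ fun i _ => ?_
  exact (ContinuousMultilinearMap.apply ℝ (fun _ : Fin 2 => Euc n) ℝ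
    ![EuclideanSpace.single i (1:ℝ), EuclideanSpace.single i 1]).continuous.comp
    (hφ.continuous_iteratedFDeriv (WithTop.coe_le_coe.2 le_top))

lemma laplacian_hcs {n : ℕ} {φ : Euc n → ℝ} (hφ : HasCompactSupport φ) :
    HasCompactSupport (laplacian φ) := by
  have h2 := hφ.iteratedFDeriv (𝕜 := ℝ) 2
  have : laplacian φ = (fun T : (Euc n) [×2]→L[ℝ] ℝ =>
      ∑ i : Fin n, T ![EuclideanSpace.single i (1:ℝ), EuclideanSpace.single i 1]) ∘
      iteratedFDeriv ℝ 2 φ := rfl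
  rw [this]
  exact h2.comp_left (by simp)

lemma vanish {n : ℕ} {V : Set (Euc n)} (hV : IsOpen V) {h : Euc n → ℝ}
    (hloc : LocallyIntegrable h volume) (hc : ContinuousOn h V)
    (H : ∀ g : Euc n → ℝ, ContDiff ℝ (⊤ : ℕ∞) g → HasCompactSupport g → tsupport g ⊆ V →
      ∫ x, g x * h x = 0) : ∀ x ∈ V, h x = 0 := by
  have hae : ∀ᵐ x ∂(volume : Measure (Euc n)), x ∈ V → h x = 0 :=
    hV.ae_eq_zero_of_integral_contDiff_smul_eq_zero (hloc.locallyIntegrableOn V)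
      (fun g hg hgs hsup => H g hg hgs hsup)
  by_contra hcon
  push_neg at hcon
  obtain ⟨x₀, hx₀V, hx₀⟩ := hcon
  have hW : IsOpen (V ∩ h ⁻¹' ({0}ᶜ)) :=
    hc.isOpen_inter_preimage hV isOpen_compl_singleton
  have hWne : (V ∩ h ⁻¹' ({0}ᶜ)).Nonempty := ⟨x₀, hx₀V, hx₀⟩
  have hpos := hW.measure_pos (volume : Measure (Euc n)) hWne
  have hzero : volume (V ∩ h ⁻¹' ({0}ᶜ)) = 0 := by
    refine measure_mono_null ?_ (ae_iff.1 hae)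
    rintro x ⟨hxV, hx⟩
    simp only [mem_setOf_eq]
    intro hcontra
    exact hx (hcontra hxV)
  exact hpos.ne' hzero

end AuxLemmas

/-- touching obstacles: in the setting of the non-scattering theorem,
with contrasts `ρ±` and real-valued total field `u_ρ = u₀ + ũ`, if `∂D₊ ∩ ∂D₋ ≠ ∅`
then the common boundary is a two-phase free boundary (`u_ρ > u₀` in `D₊` and
`u_ρ < u₀` in `D₋` near `∂D₊ ∩ ∂D₋`), and for each `x₀ ∈ ∂D₊ ∩ ∂D₋` the limits
`lim_{D₊ ∋ x → x₀} ρ₊(x) = -λ₊/u₀(x₀) > 0` and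
`lim_{D₋ ∋ x → x₀} ρ₋(x) = -λ₋/u₀(x₀) > 0` both exist. -/
theorem stmt_1 {n : ℕ} (hn : 2 ≤ n)
    (k₀ kp km lp lm : ℝ) (hk₀ : 0 ≤ k₀) (hkp : 0 ≤ kp) (hkm : 0 ≤ km)
    (hlp : 0 < lp) (hlm : 0 < lm)
    (μp μm : (Euc n → ℝ) →ₗ[ℝ] ℝ)
    (tu : Euc n → ℝ) (htu_supp : HasCompactSupport tu) (htu_cont : Continuous tu)
    (htu_int : LocallyIntegrable tu volume)
    (Dp Dm : Set (Euc n)) (hDp : Dp = {x | 0 < tu x}) (hDm : Dm = {x | tu x < 0})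
    (hμp_supp : ∃ K, IsCompact K ∧ K ⊆ Dp ∧ ∀ φ : Euc n → ℝ,
      (∃ U, IsOpen U ∧ K ⊆ U ∧ ∀ x ∈ U, φ x = 0) → μp φ = 0)
    (hμm_supp : ∃ K, IsCompact K ∧ K ⊆ Dm ∧ ∀ φ : Euc n → ℝ,
      (∃ U, IsOpen U ∧ K ⊆ U ∧ ∀ x ∈ U, φ x = 0) → μm φ = 0)
    -- the two-phase equation for `ũ`, in the sense of distributions
    (heq : ∀ φ : Euc n → ℝ, IsTestFun Set.univ φ →
      ∫ x, (tu x * laplacian φ x + (kp ^ 2 * max (tu x) 0 - km ^ 2 * max (-tu x) 0) * φ x)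
        = (lp * ∫ x in Dp, φ x) - μp φ - ((lm * ∫ x in Dm, φ x) - μm φ))
    -- the real-valued incident field `u₀`
    (u₀ : Euc n → ℝ) (hu₀c : Continuous u₀)
    (hu₀ : ∀ φ : Euc n → ℝ, IsTestFun Set.univ φ →
      ∫ x, u₀ x * (laplacian φ x + k₀ ^ 2 * φ x) = 0)
    (hu₀neg : ∀ x ∈ frontier Dp ∪ frontier Dm, u₀ x < 0)
    -- the contrasts `ρ± ∈ L∞(D±)` produced in the non-scattering theorem
    (ρp ρm : Euc n → ℝ)
    (hρp : AEStronglyMeasurable ρp volume ∧ ∃ C : ℝ, ∀ x ∈ Dp, |ρp x| ≤ C)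
    (hρm : AEStronglyMeasurable ρm volume ∧ ∃ C : ℝ, ∀ x ∈ Dm, |ρm x| ≤ C)
    (hρpc : ContinuousOn ρp Dp) (hρmc : ContinuousOn ρm Dm)
    -- the (real-valued) total field is `u_ρ = u₀ + ũ`, i.e. the scattered field is `ũ`,
    -- and it solves `(Δ + k₀² + ρ₊χ_{D₊} - ρ₋χ_{D₋}) u_ρ = 0` in `ℝⁿ`
    (heqtotal : ∀ φ : Euc n → ℝ, IsTestFun Set.univ φ →
      ∫ x, ((u₀ x + tu x) * laplacian φ x
        + (k₀ ^ 2 + Set.indicator Dp ρp x - Set.indicator Dm ρm x) * (u₀ x + tu x) * φ x)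
        = 0)
    -- the obstacles touch
    (htouch : (frontier Dp ∩ frontier Dm).Nonempty) :
    -- the common boundary is a two-phase free boundary …
    (∃ U : Set (Euc n), IsOpen U ∧ frontier Dp ∩ frontier Dm ⊆ U ∧
      (∀ x ∈ U ∩ Dp, u₀ x < u₀ x + tu x) ∧ (∀ x ∈ U ∩ Dm, u₀ x + tu x < u₀ x)) ∧
    -- … and both limits of the contrasts exist and are positive
    ∀ x₀ ∈ frontier Dp ∩ frontier Dm,
      (0 < -lp / u₀ x₀ ∧ Tendsto ρp (𝓝[Dp] x₀) (𝓝 (-lp / u₀ x₀))) ∧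
      (0 < -lm / u₀ x₀ ∧ Tendsto ρm (𝓝[Dm] x₀) (𝓝 (-lm / u₀ x₀))) := by
  -- basic topology of the obstacles
  have hDpo : IsOpen Dp := by rw [hDp]; exact isOpen_lt continuous_const htu_cont
  have hDmo : IsOpen Dm := by rw [hDm]; exact isOpen_lt htu_cont continuous_const
  have hDptu : ∀ x, x ∈ Dp ↔ 0 < tu x := by intro x; rw [hDp]; rfl
  have hDmtu : ∀ x, x ∈ Dm ↔ tu x < 0 := by intro x; rw [hDm]; rfl
  have hdisj : ∀ x, x ∈ Dp → x ∉ Dm := by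
    intro x hxp hxm
    rw [hDptu] at hxp; rw [hDmtu] at hxm; linarith
  -- boundedness and measurability of the indicator coefficient
  obtain ⟨hρpm, Cp, hCp⟩ := hρp
  obtain ⟨hρmm, Cm, hCm⟩ := hρm
  have hindp_bdd : ∀ x, |Set.indicator Dp ρp x| ≤ max Cp 0 := by
    intro x
    by_cases hx : x ∈ Dp
    · rw [Set.indicator_of_mem hx]; exact le_trans (hCp x hx) (le_max_left _ _)
    · rw [Set.indicator_of_notMem hx]; simp
  have hindm_bdd : ∀ x, |Set.indicator Dm ρm x| ≤ max Cm 0 := by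
    intro x
    by_cases hx : x ∈ Dm
    · rw [Set.indicator_of_mem hx]; exact le_trans (hCm x hx) (le_max_left _ _)
    · rw [Set.indicator_of_notMem hx]; simp
  have hind_meas : AEStronglyMeasurable
      (fun x => Set.indicator Dp ρp x - Set.indicator Dm ρm x) volume :=
    (hρpm.indicator hDpo.measurableSet).sub (hρmm.indicator hDmo.measurableSet)
  have hind_bdd : ∃ C, ∀ x, ‖Set.indicator Dp ρp x - Set.indicator Dm ρm x‖ ≤ C := by
    refine ⟨max Cp 0 + max Cm 0, fun x => ?_⟩
    rw [Real.norm_eq_abs]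
    calc |Set.indicator Dp ρp x - Set.indicator Dm ρm x|
        ≤ |Set.indicator Dp ρp x| + |Set.indicator Dm ρm x| := abs_sub _ _
      _ ≤ max Cp 0 + max Cm 0 := add_le_add (hindp_bdd x) (hindm_bdd x)
  -- the key auxiliary function H
  set H : Euc n → ℝ := fun x =>
    (Set.indicator Dp ρp x - Set.indicator Dm ρm x) * (u₀ x + tu x) +
      (k₀ ^ 2 * tu x - kp ^ 2 * max (tu x) 0 + km ^ 2 * max (-tu x) 0) with hHdef
  have hcontpart : Continuous (fun x : Euc n =>
      k₀ ^ 2 * tu x - kp ^ 2 * max (tu x) 0 + km ^ 2 * max (-tu x) 0) := by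
    exact ((continuous_const.mul htu_cont).sub
      (continuous_const.mul (htu_cont.max continuous_const))).add
      (continuous_const.mul (htu_cont.neg.max continuous_const))
  have hHloc : LocallyIntegrable H volume := by
    have h1 : LocallyIntegrable (fun x =>
        (Set.indicator Dp ρp x - Set.indicator Dm ρm x) * (u₀ x + tu x)) volume := by
      rw [locallyIntegrable_iff]
      intro K hK
      exact (((hu₀c.add htu_cont).continuousOn.integrableOn_compact hK)).bdd_mul
        hind_meas.restrict (Filter.Eventually.of_forall hind_bdd.choose_spec)
    exact h1.add hcontpart.locallyIntegrable
  -- the core distributional identity for H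
  have hint_core : ∀ φ : Euc n → ℝ, ContDiff ℝ (⊤ : ℕ∞) φ → HasCompactSupport φ →
      Integrable (fun x => φ x * H x) volume ∧
      ∫ x, φ x * H x =
        -((lp * ∫ x in Dp, φ x) - μp φ - ((lm * ∫ x in Dm, φ x) - μm φ)) := by
    intro φ hφ hcs
    have hφc : Continuous φ := hφ.continuous
    have hlc : Continuous (laplacian φ) := laplacian_continuous hφ
    have hlcs : HasCompactSupport (laplacian φ) := laplacian_hcs hcs
    have iA : Integrable (fun x => (u₀ x + tu x) * laplacian φ x) volume :=
      (((hu₀c.add htu_cont).mul hlc)).integrable_of_hasCompactSupport hlcs.mul_left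
    have iB : Integrable (fun x => k₀ ^ 2 * (u₀ x + tu x) * φ x) volume :=
      ((continuous_const.mul (hu₀c.add htu_cont)).mul hφc).integrable_of_hasCompactSupport
        hcs.mul_left
    have iψ : Integrable (fun x => (u₀ x + tu x) * φ x) volume :=
      ((hu₀c.add htu_cont).mul hφc).integrable_of_hasCompactSupport hcs.mul_left
    have iC : Integrable (fun x =>
        (Set.indicator Dp ρp x - Set.indicator Dm ρm x) * ((u₀ x + tu x) * φ x)) volume :=
      iψ.bdd_mul hind_meas (Filter.Eventually.of_forall hind_bdd.choose_spec)
    have iF2 : Integrable (fun x => u₀ x * (laplacian φ x + k₀ ^ 2 * φ x)) volume :=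
      (hu₀c.mul (hlc.add (continuous_const.mul hφc))).integrable_of_hasCompactSupport
        (hlcs.add hcs.mul_left).mul_left
    have iF3 : Integrable (fun x => tu x * laplacian φ x +
        (kp ^ 2 * max (tu x) 0 - km ^ 2 * max (-tu x) 0) * φ x) volume := by
      refine Continuous.integrable_of_hasCompactSupport ?_ ((hlcs.mul_left).add hcs.mul_left)
      exact (htu_cont.mul hlc).add
        (((continuous_const.mul (htu_cont.max continuous_const)).sub
          (continuous_const.mul (htu_cont.neg.max continuous_const))).mul hφc)
    have e1 := heqtotal φ ⟨hφ, hcs, subset_univ _⟩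
    have e2 := hu₀ φ ⟨hφ, hcs, subset_univ _⟩
    have e3 := heq φ ⟨hφ, hcs, subset_univ _⟩
    have e1' : (∫ x, ((u₀ x + tu x) * laplacian φ x + (k₀ ^ 2 * (u₀ x + tu x) * φ x +
        (Set.indicator Dp ρp x - Set.indicator Dm ρm x) * ((u₀ x + tu x) * φ x)))) = 0 := by
      rw [← e1]
      exact integral_congr_ae (Filter.Eventually.of_forall fun x => by ring)
    have hptwise : ∀ x, φ x * H x =
        ((u₀ x + tu x) * laplacian φ x + (k₀ ^ 2 * (u₀ x + tu x) * φ x +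
          (Set.indicator Dp ρp x - Set.indicator Dm ρm x) * ((u₀ x + tu x) * φ x)))
        - u₀ x * (laplacian φ x + k₀ ^ 2 * φ x)
        - (tu x * laplacian φ x +
            (kp ^ 2 * max (tu x) 0 - km ^ 2 * max (-tu x) 0) * φ x) := by
      intro x; rw [hHdef]; ring
    have hI := (((iA.add (iB.add iC)).sub iF2).sub iF3).congr
      (Filter.Eventually.of_forall fun x => (hptwise x).symm)
    refine ⟨hI, ?_⟩
    have iS1 : Integrable (fun x => (u₀ x + tu x) * laplacian φ x + (k₀ ^ 2 * (u₀ x + tu x) * φ x +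
        (Set.indicator Dp ρp x - Set.indicator Dm ρm x) * ((u₀ x + tu x) * φ x))) volume := by
      exact iA.add (iB.add iC)
    have iS2 : Integrable (fun x => ((u₀ x + tu x) * laplacian φ x + (k₀ ^ 2 * (u₀ x + tu x) * φ x +
        (Set.indicator Dp ρp x - Set.indicator Dm ρm x) * ((u₀ x + tu x) * φ x)))
        - u₀ x * (laplacian φ x + k₀ ^ 2 * φ x)) volume := by
      exact iS1.sub iF2
    have t2 := integral_sub iS1 iF2
    have t1 := integral_sub iS2 iF3
    have : ∫ x, φ x * H x =
        (∫ x, ((u₀ x + tu x) * laplacian φ x + (k₀ ^ 2 * (u₀ x + tu x) * φ x +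
          (Set.indicator Dp ρp x - Set.indicator Dm ρm x) * ((u₀ x + tu x) * φ x))))
        - (∫ x, u₀ x * (laplacian φ x + k₀ ^ 2 * φ x))
        - (∫ x, (tu x * laplacian φ x +
            (kp ^ 2 * max (tu x) 0 - km ^ 2 * max (-tu x) 0) * φ x)) := by
      rw [← t2, ← t1]
      exact integral_congr_ae (Filter.Eventually.of_forall fun x => hptwise x)
    rw [this, e1', e2, e3]; ring
  constructor
  · -- the free boundary statement, with U = univ
    refine ⟨Set.univ, isOpen_univ, subset_univ _, fun x hx => ?_, fun x hx => ?_⟩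
    · have := (hDptu x).1 hx.2; linarith
    · have := (hDmtu x).1 hx.2; linarith
  · -- the limits of the contrasts
    intro x₀ hx₀
    obtain ⟨hx₀p, hx₀m⟩ := hx₀
    have hx₀np : x₀ ∉ Dp := by
      rw [hDpo.frontier_eq] at hx₀p; exact hx₀p.2
    have hx₀nm : x₀ ∉ Dm := by
      rw [hDmo.frontier_eq] at hx₀m; exact hx₀m.2
    have htux₀ : tu x₀ = 0 := by
      have h1 : ¬ 0 < tu x₀ := fun h => hx₀np ((hDptu x₀).2 h)
      have h2 : ¬ tu x₀ < 0 := fun h => hx₀nm ((hDmtu x₀).2 h)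
      linarith [le_of_not_gt h1, le_of_not_gt h2]
    have hu₀x₀ : u₀ x₀ < 0 := hu₀neg x₀ (Set.mem_union_left _ hx₀p)
    constructor
    · -- the plus side
      obtain ⟨Kp, hKpc, hKpsub, hKp0⟩ := hμp_supp
      have hx₀K : x₀ ∉ Kp := fun h => hx₀np (hKpsub h)
      have hopen : IsOpen ({x : Euc n | u₀ x + tu x < u₀ x₀ / 2} ∩ Kpᶜ) :=
        (isOpen_lt (hu₀c.add htu_cont) continuous_const).inter
          hKpc.isClosed.isOpen_compl
      have hx₀mem : x₀ ∈ {x : Euc n | u₀ x + tu x < u₀ x₀ / 2} ∩ Kpᶜ := by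
        refine ⟨?_, hx₀K⟩
        simp only [mem_setOf_eq]; rw [htux₀]; linarith
      obtain ⟨r, hr, hball⟩ := Metric.isOpen_iff.1 hopen x₀ hx₀mem
      set V : Set (Euc n) := Dp ∩ ball x₀ r with hVdef
      have hVo : IsOpen V := hDpo.inter isOpen_ball
      have hVsub : V ⊆ Dp := inter_subset_left
      have hVden : ∀ x ∈ V, u₀ x + tu x < 0 := by
        intro x hx
        have := (hball hx.2).1
        simp only [mem_setOf_eq] at this
        linarith
      -- continuity of H + lp on V
      have hEq : EqOn (fun x => H x + lp)
          (fun x => ρp x * (u₀ x + tu x) + (k₀ ^ 2 * tu x - kp ^ 2 * tu x + lp)) V := by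
        intro x hx
        have hxp : x ∈ Dp := hVsub hx
        have htup : 0 < tu x := (hDptu x).1 hxp
        have hxm : x ∉ Dm := hdisj x hxp
        simp only [hHdef]
        rw [Set.indicator_of_mem hxp, Set.indicator_of_notMem hxm,
          max_eq_left htup.le, max_eq_right (by linarith : -tu x ≤ 0)]
        ring
      have hcontOn : ContinuousOn (fun x => H x + lp) V := by
        refine ContinuousOn.congr ?_ hEq
        exact ((hρpc.mono hVsub).mul ((hu₀c.add htu_cont).continuousOn)).add
          ((((continuous_const.mul htu_cont).sub (continuous_const.mul htu_cont)).add
            continuous_const).continuousOn)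
      -- the distributional identity on V
      have hzeroV : ∀ x ∈ V, H x + lp = 0 := by
        refine vanish hVo (hHloc.add (locallyIntegrable_const lp)) hcontOn ?_
        intro g hg hgcs hgsup
        have hgi : Integrable g volume := hg.continuous.integrable_of_hasCompactSupport hgcs
        obtain ⟨hI, hval⟩ := hint_core g hg hgcs
        have hgz : ∀ x, x ∉ V → g x = 0 := fun x hx =>
          image_eq_zero_of_notMem_tsupport (fun hmem => hx (hgsup hmem))
        have hDpint : ∫ x in Dp, g x = ∫ x, g x :=
          setIntegral_eq_integral_of_forall_compl_eq_zero (fun x hx =>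
            hgz x (fun hxV => hx (hVsub hxV)))
        have hDmint : ∫ x in Dm, g x = 0 :=
          setIntegral_eq_zero_of_forall_eq_zero (fun x hx =>
            hgz x (fun hxV => hdisj x (hVsub hxV) hx))
        have hμpz : μp g = 0 := by
          refine hKp0 g ⟨(tsupport g)ᶜ, (isClosed_tsupport g).isOpen_compl, ?_, ?_⟩
          · intro x hx hmem
            exact ((hball (hgsup hmem).2).2 : x ∈ Kpᶜ) hx
          · intro x hx
            exact image_eq_zero_of_notMem_tsupport hx
        have hμmz : μm g = 0 := by
          obtain ⟨Km, hKmc, hKmsub, hKm0⟩ := hμm_supp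
          refine hKm0 g ⟨(tsupport g)ᶜ, (isClosed_tsupport g).isOpen_compl, ?_, ?_⟩
          · intro x hx hmem
            exact hdisj x (hVsub (hgsup hmem)) (hKmsub hx)
          · intro x hx
            exact image_eq_zero_of_notMem_tsupport hx
        have : ∫ x, g x * (H x + lp) = (∫ x, g x * H x) + lp * ∫ x, g x := by
          have haddx := integral_add hI (show Integrable (fun x => lp * g x) volume from hgi.const_mul lp)
          calc ∫ x, g x * (H x + lp) = ∫ x, (g x * H x + lp * g x) :=
                integral_congr_ae (Filter.Eventually.of_forall fun x => by ring)
            _ = (∫ x, g x * H x) + ∫ x, lp * g x := haddx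
            _ = (∫ x, g x * H x) + lp * ∫ x, g x := by rw [integral_const_mul]
        rw [this, hval, hDpint, hDmint, hμpz, hμmz]; ring
      -- the pointwise formula for ρp on V
      have hformula : ∀ x ∈ V, ρp x = (-lp - (k₀ ^ 2 - kp ^ 2) * tu x) / (u₀ x + tu x) := by
        intro x hx
        have hden : u₀ x + tu x ≠ 0 := (hVden x hx).ne
        have h0 := hzeroV x hx
        have h0' := hEq hx
        simp only at h0'
        rw [h0'] at h0
        rw [eq_div_iff hden]
        linarith
      have hΦ : Tendsto (fun x => (-lp - (k₀ ^ 2 - kp ^ 2) * tu x) / (u₀ x + tu x))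
          (𝓝 x₀) (𝓝 (-lp / u₀ x₀)) := by
        have hca : ContinuousAt (fun x => (-lp - (k₀ ^ 2 - kp ^ 2) * tu x) / (u₀ x + tu x)) x₀ := by
          refine ContinuousAt.div ?_ ((hu₀c.add htu_cont).continuousAt) ?_
          · exact (continuous_const.sub (continuous_const.mul htu_cont)).continuousAt
          · rw [htux₀]; simpa using hu₀x₀.ne
        have := hca.tendsto
        rw [show (-lp - (k₀ ^ 2 - kp ^ 2) * tu x₀) / (u₀ x₀ + tu x₀) = -lp / u₀ x₀ by
          rw [htux₀]; ring_nf] at this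
        exact this
      refine ⟨div_pos_iff.2 (Or.inr ⟨by linarith, hu₀x₀⟩), ?_⟩
      refine Tendsto.congr' ?_ (hΦ.mono_left nhdsWithin_le_nhds)
      filter_upwards [self_mem_nhdsWithin,
        mem_nhdsWithin_of_mem_nhds (ball_mem_nhds x₀ hr)] with x hxD hxb
      exact (hformula x ⟨hxD, hxb⟩).symm
    · -- the minus side
      obtain ⟨Km, hKmc, hKmsub, hKm0⟩ := hμm_supp
      have hx₀K : x₀ ∉ Km := fun h => hx₀nm (hKmsub h)
      have hopen : IsOpen ({x : Euc n | u₀ x + tu x < u₀ x₀ / 2} ∩ Kmᶜ) :=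
        (isOpen_lt (hu₀c.add htu_cont) continuous_const).inter
          hKmc.isClosed.isOpen_compl
      have hx₀mem : x₀ ∈ {x : Euc n | u₀ x + tu x < u₀ x₀ / 2} ∩ Kmᶜ := by
        refine ⟨?_, hx₀K⟩
        simp only [mem_setOf_eq]; rw [htux₀]; linarith
      obtain ⟨r, hr, hball⟩ := Metric.isOpen_iff.1 hopen x₀ hx₀mem
      set V : Set (Euc n) := Dm ∩ ball x₀ r with hVdef
      have hVo : IsOpen V := hDmo.inter isOpen_ball
      have hVsub : V ⊆ Dm := inter_subset_left
      have hVden : ∀ x ∈ V, u₀ x + tu x < 0 := by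
        intro x hx
        have := (hball hx.2).1
        simp only [mem_setOf_eq] at this
        linarith
      have hEq : EqOn (fun x => H x - lm)
          (fun x => -(ρm x * (u₀ x + tu x)) + (k₀ ^ 2 * tu x - km ^ 2 * tu x - lm)) V := by
        intro x hx
        have hxm : x ∈ Dm := hVsub hx
        have htum : tu x < 0 := (hDmtu x).1 hxm
        have hxp : x ∉ Dp := fun hxp => hdisj x hxp hxm
        simp only [hHdef]
        rw [Set.indicator_of_mem hxm, Set.indicator_of_notMem hxp,
          max_eq_right htum.le, max_eq_left (by linarith : (0:ℝ) ≤ -tu x)]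
        ring
      have hcontOn : ContinuousOn (fun x => H x - lm) V := by
        refine ContinuousOn.congr ?_ hEq
        exact (((hρmc.mono hVsub).mul ((hu₀c.add htu_cont).continuousOn)).neg).add
          ((((continuous_const.mul htu_cont).sub (continuous_const.mul htu_cont)).sub
            continuous_const).continuousOn)
      have hzeroV : ∀ x ∈ V, H x - lm = 0 := by
        refine vanish hVo (hHloc.sub (locallyIntegrable_const lm)) hcontOn ?_
        intro g hg hgcs hgsup
        have hgi : Integrable g volume := hg.continuous.integrable_of_hasCompactSupport hgcs
        obtain ⟨hI, hval⟩ := hint_core g hg hgcs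
        have hgz : ∀ x, x ∉ V → g x = 0 := fun x hx =>
          image_eq_zero_of_notMem_tsupport (fun hmem => hx (hgsup hmem))
        have hDmint : ∫ x in Dm, g x = ∫ x, g x :=
          setIntegral_eq_integral_of_forall_compl_eq_zero (fun x hx =>
            hgz x (fun hxV => hx (hVsub hxV)))
        have hDpint : ∫ x in Dp, g x = 0 :=
          setIntegral_eq_zero_of_forall_eq_zero (fun x hx =>
            hgz x (fun hxV => hdisj x hx (hVsub hxV)))
        have hμmz : μm g = 0 := by
          refine hKm0 g ⟨(tsupport g)ᶜ, (isClosed_tsupport g).isOpen_compl, ?_, ?_⟩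
          · intro x hx hmem
            exact ((hball (hgsup hmem).2).2 : x ∈ Kmᶜ) hx
          · intro x hx
            exact image_eq_zero_of_notMem_tsupport hx
        have hμpz : μp g = 0 := by
          obtain ⟨Kp, hKpc, hKpsub, hKp0⟩ := hμp_supp
          refine hKp0 g ⟨(tsupport g)ᶜ, (isClosed_tsupport g).isOpen_compl, ?_, ?_⟩
          · intro x hx hmem
            exact hdisj x (hKpsub hx) (hVsub (hgsup hmem))
          · intro x hx
            exact image_eq_zero_of_notMem_tsupport hx
        have : ∫ x, g x * (H x - lm) = (∫ x, g x * H x) - lm * ∫ x, g x := by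
          have hsub := integral_sub hI (show Integrable (fun x => lm * g x) volume from hgi.const_mul lm)
          calc ∫ x, g x * (H x - lm) = ∫ x, (g x * H x - lm * g x) :=
                integral_congr_ae (Filter.Eventually.of_forall fun x => by ring)
            _ = (∫ x, g x * H x) - ∫ x, lm * g x := hsub
            _ = (∫ x, g x * H x) - lm * ∫ x, g x := by rw [integral_const_mul]
        rw [this, hval, hDpint, hDmint, hμpz, hμmz]; ring
      have hformula : ∀ x ∈ V, ρm x = ((k₀ ^ 2 - km ^ 2) * tu x - lm) / (u₀ x + tu x) := by
        intro x hx
        have hden : u₀ x + tu x ≠ 0 := (hVden x hx).ne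
        have h0 := hzeroV x hx
        have h0' := hEq hx
        simp only at h0'
        rw [h0'] at h0
        rw [eq_div_iff hden]
        linarith
      have hΦ : Tendsto (fun x => ((k₀ ^ 2 - km ^ 2) * tu x - lm) / (u₀ x + tu x))
          (𝓝 x₀) (𝓝 (-lm / u₀ x₀)) := by
        have hca : ContinuousAt (fun x => ((k₀ ^ 2 - km ^ 2) * tu x - lm) / (u₀ x + tu x)) x₀ := by
          refine ContinuousAt.div ?_ ((hu₀c.add htu_cont).continuousAt) ?_
          · exact ((continuous_const.mul htu_cont).sub continuous_const).continuousAt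
          · rw [htux₀]; simpa using hu₀x₀.ne
        have := hca.tendsto
        rw [show ((k₀ ^ 2 - km ^ 2) * tu x₀ - lm) / (u₀ x₀ + tu x₀) = -lm / u₀ x₀ by
          rw [htux₀]; ring_nf] at this
        exact this
      refine ⟨div_pos_iff.2 (Or.inr ⟨by linarith, hu₀x₀⟩), ?_⟩
      refine Tendsto.congr' ?_ (hΦ.mono_left nhdsWithin_le_nhds)
      filter_upwards [self_mem_nhdsWithin,
        mem_nhdsWithin_of_mem_nhds (ball_mem_nhds x₀ hr)] with x hxD hxb
      exact (hformula x ⟨hxD, hxb⟩).symm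


end
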